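/- The function f(x,y) = (√x − √y)² is convex on the quadrant {(x,y) : x ≥ 0, y ≥ 0}. -/
import Mathlib


/-- The function f(x,y) = (√x − √y)² is convex on the closed first quadrant. -/
theorem stmt_2 :
    ConvexOn ℝ {p : ℝ × ℝ | 0 ≤ p.1 ∧ 0 ≤ p.2}
      (fun p : ℝ × ℝ => (Real.sqrt p.1 - Real.sqrt p.2) ^ 2) := by
  constructor
  · intro p hp q hq t s ht hs hts
    exact ⟨add_nonneg (smul_nonneg ht hp.1) (smul_nonneg hs hq.1),
      add_nonneg (smul_nonneg ht hp.2) (smul_nonneg hs hq.2)⟩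
  · rintro ⟨x1, y1⟩ ⟨hx1, hy1⟩ ⟨x2, y2⟩ ⟨hx2, hy2⟩ t s ht hs hts
    simp only [Prod.smul_mk, Prod.mk_add_mk, smul_eq_mul]
    set A := Real.sqrt x1 with hA
    set B := Real.sqrt y1 with hB
    set C := Real.sqrt x2 with hC
    set D := Real.sqrt y2 with hD
    set E := Real.sqrt (t * x1 + s * x2) with hE
    set F := Real.sqrt (t * y1 + s * y2) with hF
    have hA0 : 0 ≤ A := Real.sqrt_nonneg _
    have hB0 : 0 ≤ B := Real.sqrt_nonneg _
    have hC0 : 0 ≤ C := Real.sqrt_nonneg _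
    have hD0 : 0 ≤ D := Real.sqrt_nonneg _
    have hE0 : 0 ≤ E := Real.sqrt_nonneg _
    have hF0 : 0 ≤ F := Real.sqrt_nonneg _
    have hA2 : A ^ 2 = x1 := Real.sq_sqrt hx1
    have hB2 : B ^ 2 = y1 := Real.sq_sqrt hy1
    have hC2 : C ^ 2 = x2 := Real.sq_sqrt hx2
    have hD2 : D ^ 2 = y2 := Real.sq_sqrt hy2
    have hE2 : E ^ 2 = t * x1 + s * x2 := Real.sq_sqrt (by positivity)
    have hF2 : F ^ 2 = t * y1 + s * y2 := Real.sq_sqrt (by positivity)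
    -- Cauchy–Schwarz: (t*A*B + s*C*D)^2 ≤ E^2 * F^2
    have hCS : (t * (A * B) + s * (C * D)) ^ 2 ≤ E ^ 2 * F ^ 2 := by
      rw [hE2, hF2, ← hA2, ← hB2, ← hC2, ← hD2]
      nlinarith [sq_nonneg (A * D - B * C), mul_nonneg ht hs]
    have hkey : t * (A * B) + s * (C * D) ≤ E * F := by
      have h1 : 0 ≤ t * (A * B) + s * (C * D) := by positivity
      nlinarith [mul_nonneg hE0 hF0]
    nlinarith [hkey]
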